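/- Under the constraint μ₁ = μ₂ = μ, the KL-minimizing common fundamental is μ△*(c) = [1/(1 + P[X₁ ≤ c](1+γ)²)]·μ• + [P[X₁ ≤ c](1+γ)²/(1 + P[X₁ ≤ c](1+γ)²)]·μ₂°(c), where μ₂°(c) = μ• − (γ/(1+γ))(μ• − E[X₁ | X₁ ≤ c]). Moreover μ△*(c) < μ• and μ△*(c) > μ• − γ(μ• − E[X₁ | X₁ ≤ c]) for every c ∈ ℝ when γ > 0. -/

import Mathlib

open MeasureTheory Set Filter

/-- Gaussian density with mean `a` and variance `s2`. -/
noncomputable def gauss (a s2 x : ℝ) : ℝ :=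
  (Real.sqrt (2 * Real.pi * s2))⁻¹ * Real.exp (-(x - a) ^ 2 / (2 * s2))

/-- Mean of a `N(a, s2)` random variable truncated above at `c`, i.e. `E[X | X ≤ c]`. -/
noncomputable def truncMean (a s2 c : ℝ) : ℝ :=
  (∫ x in Iic c, x * gauss a s2 x) / (∫ x in Iic c, gauss a s2 x)

/-- The KL objective for the constrained inference `μ₁ = μ₂ = μ` (up to constants). -/
noncomputable def xiCommon (μb s2 γ c μ : ℝ) : ℝ :=
  (μ - μb) ^ 2 / 2 + ∫ x in Iic c, gauss μb s2 x * ((1 + γ) * μ - γ * x - μb) ^ 2 / 2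

lemma gauss_eq (a s2 x : ℝ) :
    gauss a s2 x = (Real.sqrt (2 * Real.pi * s2))⁻¹ * Real.exp (-(2*s2)⁻¹ * (x - a) ^ 2) := by
  unfold gauss
  congr 1
  ring_nf

lemma gauss_pos (a s2 x : ℝ) (hs2 : 0 < s2) : 0 < gauss a s2 x := by
  unfold gauss
  have : 0 < Real.sqrt (2 * Real.pi * s2) :=
    Real.sqrt_pos.2 (by positivity)
  positivity

lemma integrable_gauss0 (a s2 : ℝ) (hs2 : 0 < s2) : Integrable (gauss a s2) := by
  have hb : (0:ℝ) < (2*s2)⁻¹ := by positivity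
  have h := ((integrable_exp_neg_mul_sq hb).comp_sub_right a).const_mul
    (Real.sqrt (2 * Real.pi * s2))⁻¹
  exact h.congr (by
    filter_upwards with x
    rw [gauss_eq])

lemma integrable_gauss1 (a s2 : ℝ) (hs2 : 0 < s2) :
    Integrable (fun x => x * gauss a s2 x) := by
  have hb : (0:ℝ) < (2*s2)⁻¹ := by positivity
  set C := (Real.sqrt (2 * Real.pi * s2))⁻¹ with hC
  have h1 := ((integrable_mul_exp_neg_mul_sq hb).comp_sub_right a).const_mul C
  have h0 := (integrable_gauss0 a s2 hs2).const_mul a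
  refine (h1.add h0).congr ?_
  filter_upwards with x
  rw [gauss_eq]
  show C * ((x - a) * Real.exp (-(2*s2)⁻¹ * (x-a)^2)) + a * gauss a s2 x = _
  rw [gauss_eq]
  ring

lemma integrable_gauss2 (a s2 : ℝ) (hs2 : 0 < s2) :
    Integrable (fun x => x^2 * gauss a s2 x) := by
  have hb : (0:ℝ) < (2*s2)⁻¹ := by positivity
  set C := (Real.sqrt (2 * Real.pi * s2))⁻¹ with hC
  have hsq : Integrable (fun x : ℝ => x ^ 2 * Real.exp (-(2*s2)⁻¹ * x ^ 2)) := by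
    have := integrable_rpow_mul_exp_neg_mul_sq hb (s := 2) (by norm_num)
    refine this.congr ?_
    filter_upwards with x
    rw [show ((2:ℝ) = ((2:ℕ):ℝ)) by norm_num, Real.rpow_natCast]
  have h2 := (hsq.comp_sub_right a).const_mul C
  have h1 := (integrable_gauss1 a s2 hs2).const_mul (2*a)
  have h0 := (integrable_gauss0 a s2 hs2).const_mul (-(a^2))
  refine ((h2.add h1).add h0).congr ?_
  filter_upwards with x
  show C * ((x - a)^2 * Real.exp (-(2*s2)⁻¹ * (x-a)^2)) + 2*a * (x * gauss a s2 x)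
      + -(a^2) * gauss a s2 x = _
  rw [gauss_eq]
  ring

lemma gauss_deriv (a s2 : ℝ) (hs2 : 0 < s2) (x : ℝ) :
    HasDerivAt (fun y => -s2 * gauss a s2 y) ((x - a) * gauss a s2 x) x := by
  set C := (Real.sqrt (2 * Real.pi * s2))⁻¹ with hC
  set b := (2*s2)⁻¹ with hb
  have d1 : HasDerivAt (fun y : ℝ => (y - a)^2) (2*(x - a)^(2-1)*1) x :=
    ((hasDerivAt_id x).sub_const a).pow 2
  have d2 := (d1.const_mul (-b)).exp
  have d3 := d2.const_mul (-s2 * C)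
  have heq : ∀ y : ℝ, -s2 * C * Real.exp (-b * (y - a)^2) = -s2 * gauss a s2 y := by
    intro y; rw [gauss_eq]; ring
  have d4 : HasDerivAt (fun y => -s2 * gauss a s2 y)
      (-s2 * C * (Real.exp (-b * (x - a)^2) * (-b * (2*(x - a)^(2-1)*1)))) x := by
    refine HasDerivAt.congr_of_eventuallyEq d3 ?_
    filter_upwards with y using (heq y).symm
  convert d4 using 1
  rw [gauss_eq a s2 x, ← hC, ← hb]
  have hs2' : s2 ≠ 0 := hs2.ne'
  field_simp [hb]
  have hb2 : b * s2 * 2 = 1 := by rw [hb]; field_simp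
  linear_combination (a*C - x*C) * hb2

lemma tendsto_gauss_atBot (a s2 : ℝ) (hs2 : 0 < s2) :
    Tendsto (fun y => -s2 * gauss a s2 y) atBot (nhds 0) := by
  have hb : (0:ℝ) < (2*s2)⁻¹ := by positivity
  set C := (Real.sqrt (2 * Real.pi * s2))⁻¹ with hC
  have h1 : Tendsto (fun x:ℝ => x - a) atBot atBot :=
    tendsto_atBot_add_const_right _ _ tendsto_id
  have h2 : Tendsto (fun x:ℝ => |x - a|) atBot atTop := tendsto_abs_atBot_atTop.comp h1
  have h3 : Tendsto (fun x:ℝ => (x - a)^2) atBot atTop := by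
    have := (tendsto_pow_atTop (two_ne_zero)).comp h2
    simpa [Function.comp_def, sq_abs] using this
  have h4 : Tendsto (fun x:ℝ => -(2*s2)⁻¹ * (x - a)^2) atBot atBot := by
    have h4a := tendsto_neg_atTop_atBot.comp (h3.const_mul_atTop hb)
    simpa [Function.comp_def, neg_mul] using h4a
  have h5 : Tendsto (fun x:ℝ => Real.exp (-(2*s2)⁻¹ * (x - a)^2)) atBot (nhds 0) :=
    Real.tendsto_exp_atBot.comp h4
  have h6 := h5.const_mul (-s2 * C)
  rw [mul_zero] at h6
  refine h6.congr (fun x => ?_)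
  rw [gauss_eq]
  ring

/-- key strict inequality: `∫_{Iic c} x·gauss < μb · ∫_{Iic c} gauss`. -/
lemma truncated_mean_lt (a s2 c : ℝ) (hs2 : 0 < s2) :
    (∫ x in Iic c, x * gauss a s2 x) < a * ∫ x in Iic c, gauss a s2 x := by
  have hI : IntegrableOn (fun x => (x - a) * gauss a s2 x) (Iic c) := by
    have h := (integrable_gauss1 a s2 hs2).sub ((integrable_gauss0 a s2 hs2).const_mul a)
    refine (h.congr ?_).integrableOn
    filter_upwards with x
    simp only [Pi.sub_apply]
    ring
  have hFTC : (∫ x in Iic c, (x - a) * gauss a s2 x) = -s2 * gauss a s2 c - 0 :=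
    integral_Iic_of_hasDerivAt_of_tendsto' (fun x _ => gauss_deriv a s2 hs2 x) hI
      (tendsto_gauss_atBot a s2 hs2)
  have hsplit : (∫ x in Iic c, (x - a) * gauss a s2 x)
      = (∫ x in Iic c, x * gauss a s2 x) - a * ∫ x in Iic c, gauss a s2 x := by
    rw [← integral_const_mul]
    rw [← integral_sub ((integrable_gauss1 a s2 hs2).integrableOn)
      (((integrable_gauss0 a s2 hs2).const_mul a).integrableOn)]
    congr 1; funext x; ring
  have hneg : -s2 * gauss a s2 c - 0 < 0 := by
    have := gauss_pos a s2 c hs2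
    nlinarith
  rw [hsplit] at hFTC
  linarith [hFTC, hneg]

lemma P_pos (a s2 c : ℝ) (hs2 : 0 < s2) : 0 < ∫ x in Iic c, gauss a s2 x := by
  rw [setIntegral_pos_iff_support_of_nonneg_ae]
  · have : Function.support (gauss a s2) = univ := by
      ext x; simp [Function.mem_support, (gauss_pos a s2 x hs2).ne']
    rw [this]
    simp [Real.volume_Iic]
  · filter_upwards with x using (gauss_pos a s2 x hs2).le
  · exact (integrable_gauss0 a s2 hs2).integrableOn

/-- Under the constraint `μ₁ = μ₂ = μ`, the unique KL minimizer is the stated convex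
combination of `μ•` and `μ₂°(c) = μ• − (γ/(1+γ))(μ• − E[X₁|X₁ ≤ c])`; moreover it is
strictly below `μ•` and strictly above the unconstrained pseudo-true fundamental
`μ• − γ(μ• − E[X₁|X₁ ≤ c])`. -/
theorem constrained_pseudo_true (μb s2 γ c : ℝ) (hs2 : 0 < s2) (hγ : 0 < γ) :
    let P := ∫ x in Iic c, gauss μb s2 x
    let μ2c := μb - γ / (1 + γ) * (μb - truncMean μb s2 c)
    let μΔ := 1 / (1 + P * (1 + γ) ^ 2) * μb +
      P * (1 + γ) ^ 2 / (1 + P * (1 + γ) ^ 2) * μ2c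
    (∀ μ : ℝ, xiCommon μb s2 γ c μΔ ≤ xiCommon μb s2 γ c μ) ∧
    (∀ μ : ℝ, (∀ μ' : ℝ, xiCommon μb s2 γ c μ ≤ xiCommon μb s2 γ c μ') → μ = μΔ) ∧
    μΔ < μb ∧ μb - γ * (μb - truncMean μb s2 c) < μΔ := by
  intro P μ2c μΔ
  set M := ∫ x in Iic c, x * gauss μb s2 x with hM
  set S := ∫ x in Iic c, x^2 * gauss μb s2 x with hS
  have hP : 0 < P := P_pos μb s2 c hs2
  have hPM : M < P * μb := by
    have := truncated_mean_lt μb s2 c hs2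
    rw [← hM] at this; linarith [this]
  have hγ1 : (0:ℝ) < 1 + γ := by linarith
  have hK : (0:ℝ) < 1 + P * (1 + γ) ^ 2 := by positivity
  set K := 1 + P * (1 + γ) ^ 2 with hKdef
  -- the quadratic expansion of the objective
  have key : ∀ μ : ℝ, xiCommon μb s2 γ c μ = (μ - μb)^2/2 +
      (((1+γ)*μ - μb)^2/2 * P - ((1+γ)*μ - μb)*γ*M + γ^2/2 * S) := by
    intro μ
    unfold xiCommon
    congr 1
    have hre : ∀ x : ℝ, gauss μb s2 x * ((1 + γ) * μ - γ * x - μb) ^ 2 / 2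
        = (((1+γ)*μ - μb)^2/2) * gauss μb s2 x +
          ((-(((1+γ)*μ - μb)*γ)) * (x * gauss μb s2 x) + (γ^2/2) * (x^2 * gauss μb s2 x)) := by
      intro x; ring
    rw [integral_congr_ae (Filter.Eventually.of_forall hre)]
    have I1 : IntegrableOn (fun x => (((1+γ)*μ - μb)^2/2) * gauss μb s2 x) (Iic c) volume :=
      ((integrable_gauss0 μb s2 hs2).const_mul _).integrableOn
    have I2 : IntegrableOn (fun x => (-(((1+γ)*μ - μb)*γ)) * (x * gauss μb s2 x)) (Iic c) volume :=
      ((integrable_gauss1 μb s2 hs2).const_mul _).integrableOn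
    have I3 : IntegrableOn (fun x => (γ^2/2) * (x^2 * gauss μb s2 x)) (Iic c) volume :=
      ((integrable_gauss2 μb s2 hs2).const_mul _).integrableOn
    have I23 : IntegrableOn (fun x => (-(((1+γ)*μ - μb)*γ)) * (x * gauss μb s2 x)
        + (γ^2/2) * (x^2 * gauss μb s2 x)) (Iic c) volume := I2.add I3
    rw [integral_add I1 I23, integral_add I2 I3,
      integral_const_mul, integral_const_mul, integral_const_mul]
    rw [← hM, ← hS]
    ring
  -- characterization of μΔ
  have htrunc : truncMean μb s2 c = M / P := rfl
  have hμΔK : μΔ * K = μb + (1+γ)*P*μb + γ*(1+γ)*M := by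
    show (1 / K * μb + P * (1 + γ) ^ 2 / K *
      (μb - γ / (1 + γ) * (μb - truncMean μb s2 c))) * K = _
    rw [htrunc]
    field_simp
    ring
  -- quadratic identity
  have hquad : ∀ μ : ℝ, xiCommon μb s2 γ c μ
      = xiCommon μb s2 γ c μΔ + K/2 * (μ - μΔ)^2 := by
    intro μ
    rw [key μ, key μΔ]
    linear_combination (μ - μΔ) * hμΔK
  refine ⟨?_, ?_, ?_, ?_⟩
  · intro μ
    rw [hquad μ]
    nlinarith [mul_nonneg (half_pos hK).le (sq_nonneg (μ - μΔ))]
  · intro μ hmin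
    have h1 := hmin μΔ
    rw [hquad μ] at h1
    have h2 : K/2 * (μ - μΔ)^2 ≤ 0 := by linarith
    have h3 : (μ - μΔ)^2 ≤ 0 := by
      by_contra h
      push_neg at h
      nlinarith [mul_pos (half_pos hK) h]
    have h4 : (μ - μΔ)^2 = 0 := le_antisymm h3 (sq_nonneg _)
    have h5 : μ - μΔ = 0 := by
      have := sq_eq_zero_iff.mp h4
      linarith [this]
    linarith
  · have hid : μb - μΔ = γ*(1+γ)*(P*μb - M) / K := by
      rw [eq_div_iff hK.ne']
      linear_combination -hμΔK
    have : 0 < γ*(1+γ)*(P*μb - M) / K := by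
      apply div_pos _ hK
      have : 0 < P*μb - M := by linarith
      positivity
    linarith [hid ▸ this]
  · rw [htrunc]
    have hid : μΔ - (μb - γ * (μb - M/P))
        = (P*μb - M) * γ * (1 + γ*(1+γ)*P) / (K * P) := by
      rw [eq_div_iff (by positivity : (K*P) ≠ 0)]
      linear_combination P * hμΔK - (γ * K * M) * (mul_inv_cancel₀ hP.ne')
    have hpos : 0 < (P*μb - M) * γ * (1 + γ*(1+γ)*P) / (K * P) := by
      apply div_pos _ (by positivity)
      have : 0 < P*μb - M := by linarith
      positivity
    linarith [hid ▸ hpos]
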